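/- Suppose two disjoint closed segments of the same length ℓ > 0 are contained in the closed unit disk of ℝ² and are perpendicular to each other (their direction vectors are orthogonal). Then ℓ ≤ 8/5. (The maximum length for which two segments can fit at right angles in the unit disk is 1.6.) -/

import Mathlib

set_option maxHeartbeats 1000000 in
private theorem key_aux (L A₁ B₁ A₂ B₂ : ℝ) (hL : 0 < L)
    (h1 : (A₁+L)^2+B₁^2 ≤ 1) (h2 : (A₁-L)^2+B₁^2 ≤ 1)
    (h3 : A₂^2+(B₂+L)^2 ≤ 1) (h4 : A₂^2+(B₂-L)^2 ≤ 1)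
    (h5 : L^2 < (A₂-A₁)^2) : L ≤ 4/5 := by
  by_contra hc
  push_neg at hc
  have hA1 : A₁^2 ≤ (1-L)^2 := by
    rcases le_or_gt 0 A₁ with h | h
    · nlinarith [sq_nonneg B₁, mul_nonneg h hL.le]
    · nlinarith [sq_nonneg B₁, mul_nonneg (neg_nonneg.2 h.le) hL.le]
  have hA2 : A₂^2 ≤ 1 - L^2 := by
    rcases le_or_gt 0 B₂ with h | h
    · nlinarith [sq_nonneg B₂, mul_nonneg h hL.le]
    · nlinarith [sq_nonneg B₂, mul_nonneg (neg_nonneg.2 h.le) hL.le]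
  have hL1 : L ≤ 1 := by nlinarith [sq_nonneg B₁, sq_nonneg A₁]
  have h6 : L < |A₂ - A₁| := by
    refine lt_of_pow_lt_pow_left₀ 2 (abs_nonneg _) ?_
    rwa [sq_abs]
  have h7 : |A₁| ≤ 1 - L := by
    refine le_of_pow_le_pow_left₀ two_ne_zero (by linarith) ?_
    rwa [sq_abs]
  have h8 : 2*L - 1 < |A₂| := by
    have := abs_sub A₂ A₁
    linarith
  have h9 : (2*L-1)^2 < A₂^2 := by
    have := pow_lt_pow_left₀ h8 (by linarith : (0:ℝ) ≤ 2*L-1) two_ne_zero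
    rwa [sq_abs] at this
  have h10 : L^2 - (4/5)*L > 0 := by nlinarith [mul_pos hL (sub_pos.2 hc)]
  linarith

open scoped RealInnerProductSpace in
/-- Two disjoint perpendicular segments of the same length ℓ contained in the closed unit
disk satisfy ℓ ≤ 8/5. -/
theorem perpendicular_segments_length_le (ℓ : ℝ) (hℓ : 0 < ℓ)
    (c₁ c₂ u₁ u₂ : EuclideanSpace ℝ (Fin 2))
    (hu₁ : ‖u₁‖ = 1) (hu₂ : ‖u₂‖ = 1) (hperp : ⟪u₁, u₂⟫ = 0)
    (hin₁ : ∀ t ∈ Set.Icc (-(ℓ / 2)) (ℓ / 2), ‖c₁ + t • u₁‖ ≤ 1)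
    (hin₂ : ∀ t ∈ Set.Icc (-(ℓ / 2)) (ℓ / 2), ‖c₂ + t • u₂‖ ≤ 1)
    (hdisj : ∀ s ∈ Set.Icc (-(ℓ / 2)) (ℓ / 2), ∀ t ∈ Set.Icc (-(ℓ / 2)) (ℓ / 2),
      c₁ + s • u₁ ≠ c₂ + t • u₂) :
    ℓ ≤ 8 / 5 := by
  have coord : ∀ (c u : EuclideanSpace ℝ (Fin 2)) (t : ℝ) (i : Fin 2),
      (c + t • u) i = c i + t * u i := by
    intro c u t i; simp
  have nsq : ∀ x : EuclideanSpace ℝ (Fin 2), ‖x‖ ≤ 1 → (x 0)^2 + (x 1)^2 ≤ 1 := by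
    intro x hx
    have h2 : ⟪x, x⟫ ≤ 1 := by
      rw [real_inner_self_eq_norm_sq]
      nlinarith [norm_nonneg x]
    rw [PiLp.inner_apply, Fin.sum_univ_two] at h2
    simp only [RCLike.inner_apply, conj_trivial] at h2
    linarith [h2, sq (x 0), sq (x 1)]
  set p := u₁ 0 with hp_def
  set q := u₁ 1 with hq_def
  set r := u₂ 0 with hr_def
  set s := u₂ 1 with hs_def
  set a := c₁ 0 with ha_def
  set b := c₁ 1 with hb_def
  set a' := c₂ 0 with ha'_def
  set b' := c₂ 1 with hb'_def
  have e1 : p^2 + q^2 = 1 := by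
    have h := real_inner_self_eq_norm_sq u₁
    rw [hu₁] at h
    have h' : u₁ 0 * u₁ 0 + u₁ 1 * u₁ 1 = 1 := by
      rw [PiLp.inner_apply, Fin.sum_univ_two] at h
      simp only [RCLike.inner_apply, conj_trivial] at h
      linear_combination h
    rw [hp_def, hq_def]
    linear_combination h'
  have e2 : r^2 + s^2 = 1 := by
    have h := real_inner_self_eq_norm_sq u₂
    rw [hu₂] at h
    have h' : u₂ 0 * u₂ 0 + u₂ 1 * u₂ 1 = 1 := by
      rw [PiLp.inner_apply, Fin.sum_univ_two] at h
      simp only [RCLike.inner_apply, conj_trivial] at h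
      linear_combination h
    rw [hr_def, hs_def]
    linear_combination h'
  have e3 : p*r + q*s = 0 := by
    rw [PiLp.inner_apply, Fin.sum_univ_two] at hperp
    simp only [RCLike.inner_apply, conj_trivial] at hperp
    linear_combination hperp
  have e4 : q^2 = r^2 := by linear_combination r^2*e1 - q^2*e2 + (q*s-p*r)*e3
  have e5 : p^2 = s^2 := by linear_combination s^2*e1 - p^2*e2 + (p*r-q*s)*e3
  have e6 : p*q + r*s = 0 := by
    have h : (p*q+r*s)^2 = 0 := by
      linear_combination (p*r+q*s)*e3 + (q^2-r^2)*e5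
    exact pow_eq_zero_iff two_ne_zero |>.mp h
  have e7 : p^2 + r^2 = 1 := by linear_combination e1 - e4
  have e8 : q^2 + s^2 = 1 := by linear_combination e1 - e5
  have rot : ∀ x y : ℝ, (p*x+q*y)^2 + (r*x+s*y)^2 = x^2 + y^2 := by
    intro x y
    linear_combination x^2*e7 + y^2*e8 + 2*x*y*e6
  set A₁ := p*a + q*b with hA₁def
  set B₁ := r*a + s*b with hB₁def
  set A₂ := p*a' + q*b' with hA₂def
  set B₂ := r*a' + s*b' with hB₂def
  set L := ℓ/2 with hLdef
  have hL : 0 < L := by positivity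
  have hseg1 : ∀ t ∈ Set.Icc (-L) L, (A₁+t)^2 + B₁^2 ≤ 1 := by
    intro t ht
    have h := nsq _ (hin₁ t ht)
    rw [coord, coord] at h
    calc (A₁+t)^2 + B₁^2 = (a+t*p)^2 + (b+t*q)^2 := by
          linear_combination rot a b - t^2*e1
      _ ≤ 1 := h
  have hseg2 : ∀ t ∈ Set.Icc (-L) L, A₂^2 + (B₂+t)^2 ≤ 1 := by
    intro t ht
    have h := nsq _ (hin₂ t ht)
    rw [coord, coord] at h
    calc A₂^2 + (B₂+t)^2 = (a'+t*r)^2 + (b'+t*s)^2 := by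
          linear_combination rot a' b' - t^2*e2
      _ ≤ 1 := h
  have memL : ∀ t : ℝ, |t| ≤ L → t ∈ Set.Icc (-L) L := by
    intro t ht
    rcases abs_le.mp ht with ⟨h1, h2⟩
    exact ⟨h1, h2⟩
  have k1 := hseg1 L ⟨by linarith, le_refl L⟩
  have k2 : (A₁-L)^2 + B₁^2 ≤ 1 := by
    have := hseg1 (-L) ⟨le_refl (-L), by linarith⟩
    calc (A₁-L)^2 + B₁^2 = (A₁+(-L))^2 + B₁^2 := by ring_nf
      _ ≤ 1 := this
  have k3 := hseg2 L ⟨by linarith, le_refl L⟩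
  have k4 : A₂^2 + (B₂-L)^2 ≤ 1 := by
    have := hseg2 (-L) ⟨le_refl (-L), by linarith⟩
    calc A₂^2 + (B₂-L)^2 = A₂^2 + (B₂+(-L))^2 := by ring_nf
      _ ≤ 1 := this
  have hdisj' : L < |A₂ - A₁| ∨ L < |B₁ - B₂| := by
    by_contra hcon
    push_neg at hcon
    obtain ⟨hc1, hc2⟩ := hcon
    refine hdisj (A₂ - A₁) (memL _ hc1) (B₁ - B₂) (memL _ hc2) ?_
    ext i
    rw [coord, coord]
    fin_cases i
    · show a + (A₂ - A₁) * p = a' + (B₁ - B₂) * r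
      linear_combination (a'-a)*e7 + (b'-b)*e6
    · show b + (A₂ - A₁) * q = b' + (B₁ - B₂) * s
      linear_combination (b'-b)*e8 + (a'-a)*e6
  have hL45 : L ≤ 4/5 := by
    rcases hdisj' with h | h
    · refine key_aux L A₁ B₁ A₂ B₂ hL k1 k2 k3 k4 ?_
      have := pow_lt_pow_left₀ h (by positivity : (0:ℝ) ≤ L) two_ne_zero
      rwa [sq_abs] at this
    · refine key_aux L B₂ A₂ B₁ A₁ hL (by linarith) (by linarith) (by linarith) (by linarith) ?_
      have := pow_lt_pow_left₀ h (by positivity : (0:ℝ) ≤ L) two_ne_zero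
      rwa [sq_abs] at this
  rw [hLdef] at hL45
  linarith
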